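/- arXiv:math/0112223 — 2 statements merged into one kernel-verified Lean document; each statement's English description precedes it below -/
import Mathlib

section
/- The two defining expressions of Nakajima's bicharacter agree: for all monomials m₁, m₂ in the variables V_{i,a}, W_{i,a} (ADE case), Σ_{i,a} (v_{i,aq}(m₁)u_{i,a}(m₂) + w_{i,aq}(m₁)v_{i,a}(m₂)) = Σ_{i,a} (u_{i,a}(m₁)v_{i,aq^{-1}}(m₂) + v_{i,a}(m₁)w_{i,aq^{-1}}(m₂)). -/
open Finset

variable {I G : Type*}

/-- In the ADE setting, a monomial in the variables `V_{i,a}, W_{i,a}` is encoded by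
its pair of exponent vectors `(v, w) : (I × G →₀ ℕ) × (I × G →₀ ℕ)`.
`uIA C q m i a` is the quantity
`u_{i,a}(m) = w_{i,a}(m) - v_{i,aq⁻¹}(m) - v_{i,aq}(m) + Σ_{j : C_{j,i} = -1} v_{j,a}(m)`. -/
def uIA [Fintype I] [DecidableEq G] [Group G] (C : I → I → ℤ) (q : G)
    (m : (I × G →₀ ℕ) × (I × G →₀ ℕ)) (i : I) (a : G) : ℤ :=
  (m.2 (i, a) : ℤ) - (m.1 (i, a * q⁻¹) : ℤ) - (m.1 (i, a * q) : ℤ)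
    + ∑ j ∈ univ.filter (fun j => C j i = -1), (m.1 (j, a) : ℤ)

/-- Expand an evaluation-sum into an indicator sum over the support. -/
private lemma slice_sum [DecidableEq I] [DecidableEq G]
    (h : I × G →₀ ℕ) (Q : Finset I) (b : G) :
    ∑ j ∈ Q, (h (j, b) : ℤ)
      = ∑ p' ∈ h.support, if p'.1 ∈ Q ∧ p'.2 = b then (h p' : ℤ) else 0 := by
  calc ∑ j ∈ Q, (h (j, b) : ℤ)
      = ∑ j ∈ Q, ∑ p' ∈ h.support, if p' = (j, b) then (h p' : ℤ) else 0 := by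
        refine sum_congr rfl fun j _ => ?_
        rw [Finset.sum_ite_eq' h.support (j, b)]
        by_cases hm : (j, b) ∈ h.support
        · simp [hm]
        · simp [hm, Finsupp.notMem_support_iff.mp hm]
    _ = ∑ p' ∈ h.support, ∑ j ∈ Q, if p' = (j, b) then (h p' : ℤ) else 0 :=
        Finset.sum_comm
    _ = _ := by
        refine sum_congr rfl fun p' _ => ?_
        simp only [Prod.ext_iff]
        by_cases hb : p'.2 = b
        · simp only [hb, and_true]
          rw [Finset.sum_ite_eq]
        · simp [hb]

private lemma pairW [DecidableEq I] [DecidableEq G] [CommGroup G]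
    (f g : I × G →₀ ℕ) (t : G) (S : I → Finset I)
    (hS : ∀ i j, i ∈ S j ↔ j ∈ S i) :
    ∑ p ∈ f.support, (f p : ℤ) * ∑ j ∈ S p.1, (g (j, p.2 * t) : ℤ)
      = ∑ p ∈ g.support, (g p : ℤ) * ∑ j ∈ S p.1, (f (j, p.2 * t⁻¹) : ℤ) := by
  calc ∑ p ∈ f.support, (f p : ℤ) * ∑ j ∈ S p.1, (g (j, p.2 * t) : ℤ)
      = ∑ p ∈ f.support, ∑ p' ∈ g.support,
          if p'.1 ∈ S p.1 ∧ p'.2 = p.2 * t then (f p : ℤ) * (g p' : ℤ) else 0 := by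
        refine sum_congr rfl fun p _ => ?_
        rw [slice_sum g (S p.1) (p.2 * t), Finset.mul_sum]
        exact sum_congr rfl fun p' _ => by rw [mul_ite, mul_zero]
    _ = ∑ p' ∈ g.support, ∑ p ∈ f.support,
          if p'.1 ∈ S p.1 ∧ p'.2 = p.2 * t then (f p : ℤ) * (g p' : ℤ) else 0 :=
        Finset.sum_comm
    _ = _ := by
        refine sum_congr rfl fun p' _ => ?_
        rw [slice_sum f (S p'.1) (p'.2 * t⁻¹), Finset.mul_sum]
        refine sum_congr rfl fun p _ => ?_
        rw [mul_ite, mul_zero]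
        refine if_congr ?_ (mul_comm _ _) rfl
        constructor
        · rintro ⟨h1, h2⟩
          exact ⟨(hS _ _).mp h1, by rw [h2, mul_inv_cancel_right]⟩
        · rintro ⟨h1, h2⟩
          exact ⟨(hS _ _).mpr h1, by rw [h2, inv_mul_cancel_right]⟩

private lemma pair1 [DecidableEq I] [DecidableEq G] [CommGroup G]
    (f g : I × G →₀ ℕ) (t : G) :
    ∑ p ∈ f.support, (f p : ℤ) * (g (p.1, p.2 * t) : ℤ)
      = ∑ p ∈ g.support, (g p : ℤ) * (f (p.1, p.2 * t⁻¹) : ℤ) := by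
  have := pairW f g t (fun i => {i}) (fun i j => by simp [eq_comm])
  simpa using this

/-- The two defining expressions of Nakajima's bicharacter agree (ADE case):
`Σ_{i,a} (v_{i,aq}(m₁)u_{i,a}(m₂) + w_{i,aq}(m₁)v_{i,a}(m₂))
  = Σ_{i,a} (u_{i,a}(m₁)v_{i,aq⁻¹}(m₂) + v_{i,a}(m₁)w_{i,aq⁻¹}(m₂))`.
The (finitely supported) sums over all `(i,a)` are expressed via `Finsupp.sum`,
after reindexing `a`. -/
theorem nakajima_bicharacter_expressions_agree
    [Fintype I] [DecidableEq I] [DecidableEq G] [CommGroup G]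
    (C : I → I → ℤ) (hsym : ∀ i j, C i j = C j i) (hdiag : ∀ i, C i i = 2)
    (q : G) (hq : ∀ n : ℤ, q ^ n = 1 → n = 0)
    (m₁ m₂ : (I × G →₀ ℕ) × (I × G →₀ ℕ)) :
    (m₁.1.sum fun p c => (c : ℤ) * uIA C q m₂ p.1 (p.2 * q⁻¹)) +
      (m₁.2.sum fun p c => (c : ℤ) * (m₂.1 (p.1, p.2 * q⁻¹) : ℤ)) =
    (m₂.1.sum fun p c => (c : ℤ) * uIA C q m₁ p.1 (p.2 * q)) +
      (m₂.2.sum fun p c => (c : ℤ) * (m₁.1 (p.1, p.2 * q) : ℤ)) := by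
  classical
  simp only [Finsupp.sum, uIA]
  have expand : ∀ (f : I × G →₀ ℕ) (A B C' D : I × G → ℤ),
      ∑ p ∈ f.support, (f p : ℤ) * (A p - B p - C' p + D p)
        = ∑ p ∈ f.support, (f p : ℤ) * A p - ∑ p ∈ f.support, (f p : ℤ) * B p
          - ∑ p ∈ f.support, (f p : ℤ) * C' p + ∑ p ∈ f.support, (f p : ℤ) * D p := by
    intro f A B C' D
    simp only [mul_sub, mul_add, Finset.sum_add_distrib, Finset.sum_sub_distrib]
  rw [expand m₁.1 _ _ _ _, expand m₂.1 _ _ _ _]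
  simp only [mul_assoc, inv_mul_cancel, mul_inv_cancel, mul_one]
  have hS : ∀ i j : I, i ∈ univ.filter (fun k => C k j = -1)
      ↔ j ∈ univ.filter (fun k => C k i = -1) := by
    intro i j
    simp only [mem_filter, mem_univ, true_and]
    rw [hsym i j, hsym j i]
  have h1 : ∑ p ∈ m₁.1.support, (m₁.1 p : ℤ) * (m₂.2 (p.1, p.2 * q⁻¹) : ℤ)
      = ∑ p ∈ m₂.2.support, (m₂.2 p : ℤ) * (m₁.1 (p.1, p.2 * q) : ℤ) := by
    simpa using pair1 m₁.1 m₂.2 q⁻¹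
  have h2 : ∑ p ∈ m₁.1.support, (m₁.1 p : ℤ) * (m₂.1 (p.1, p.2 * (q⁻¹ * q⁻¹)) : ℤ)
      = ∑ p ∈ m₂.1.support, (m₂.1 p : ℤ) * (m₁.1 (p.1, p.2 * (q * q)) : ℤ) := by
    simpa [mul_inv_rev] using pair1 m₁.1 m₂.1 (q⁻¹ * q⁻¹)
  have h3 : ∑ p ∈ m₁.1.support, (m₁.1 p : ℤ) * (m₂.1 p : ℤ)
      = ∑ p ∈ m₂.1.support, (m₂.1 p : ℤ) * (m₁.1 p : ℤ) := by
    simpa using pair1 m₁.1 m₂.1 (1 : G)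
  have h4 : ∑ p ∈ m₁.1.support, (m₁.1 p : ℤ)
        * ∑ j ∈ univ.filter (fun k => C k p.1 = -1), (m₂.1 (j, p.2 * q⁻¹) : ℤ)
      = ∑ p ∈ m₂.1.support, (m₂.1 p : ℤ)
        * ∑ j ∈ univ.filter (fun k => C k p.1 = -1), (m₁.1 (j, p.2 * q) : ℤ) := by
    simpa using pairW m₁.1 m₂.1 q⁻¹ (fun i => univ.filter (fun k => C k i = -1)) hS
  have h5 : ∑ p ∈ m₁.2.support, (m₁.2 p : ℤ) * (m₂.1 (p.1, p.2 * q⁻¹) : ℤ)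
      = ∑ p ∈ m₂.1.support, (m₂.1 p : ℤ) * (m₁.2 (p.1, p.2 * q) : ℤ) := by
    simpa using pair1 m₁.2 m₂.1 q⁻¹
  rw [h1, h2, h3, h4, h5]
  ring
end

section
/- Let m₁, ..., m_p be monomials in Ŷ_t (ADE case) such that for some fixed a, u_{i,a}(m_r) = 1 and u_{i,b}(m_r) = 0 for all b ≠ a and all r. Then there exists α ∈ ℤ with (m₁*(1+V_{i,aq})) * (m₂*(1+V_{i,aq})) * ... * (m_p*(1+V_{i,aq})) = t^α · m₁⋯m_p · Σ_{r=0}^{p} t^{r(p-r)}·[p choose r]_t · V_{i,aq}^r, where * is the multiplication twisted by Nakajima's bicharacter d_N. -/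
open Finset LaurentPolynomial

variable {I G : Type*}

/-- The Gaussian binomial coefficient in the variable `q = t²`. -/
noncomputable def gaussBinom : ℕ → ℕ → LaurentPolynomial ℤ
  | _, 0 => 1
  | 0, _ + 1 => 0
  | n + 1, k + 1 => gaussBinom n k + T 2 ^ (k + 1) * gaussBinom n (k + 1)

/-- The balanced `t`-binomial `[n choose k]_t = t^{-k(n-k)}·[n choose k]_{q=t²}`. -/
noncomputable def tBinom (n k : ℕ) : LaurentPolynomial ℤ :=
  T (-((k : ℤ) * ((n : ℤ) - (k : ℤ)))) * gaussBinom n k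

/-- Nakajima's bicharacter `d_N`. -/
def dN [Fintype I] [DecidableEq G] [Group G] (C : I → I → ℤ) (q : G)
    (m₁ m₂ : (I × G →₀ ℕ) × (I × G →₀ ℕ)) : ℤ :=
  (m₁.1.sum fun p c => (c : ℤ) * uIA C q m₂ p.1 (p.2 * q⁻¹)) +
    (m₁.2.sum fun p c => (c : ℤ) * (m₂.1 (p.1, p.2 * q⁻¹) : ℤ))

/-- The star product on `Ŷ_t` twisted by `d_N`. -/
noncomputable def star [Fintype I] [DecidableEq G] [Group G] (C : I → I → ℤ) (q : G)
    (x y : AddMonoidAlgebra (LaurentPolynomial ℤ) ((I × G →₀ ℕ) × (I × G →₀ ℕ))) :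
    AddMonoidAlgebra (LaurentPolynomial ℤ) ((I × G →₀ ℕ) × (I × G →₀ ℕ)) :=
  x.coeff.sum fun m₁ c₁ => y.coeff.sum fun m₂ c₂ =>
    AddMonoidAlgebra.single (m₁ + m₂) (T (2 * dN C q m₁ m₂) * c₁ * c₂)

/-- The monomial `V_{i,b}`. -/
noncomputable def Vmon [Group G] (i : I) (b : G) : (I × G →₀ ℕ) × (I × G →₀ ℕ) :=
  (Finsupp.single (i, b) 1, 0)

/-! ### Auxiliary lemmas -/

set_option linter.unusedSectionVars false

lemma gauss_zero (n : ℕ) : gaussBinom n 0 = 1 := by cases n <;> rfl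

lemma gauss_of_lt : ∀ {n k : ℕ}, n < k → gaussBinom n k = 0 := by
  intro n
  induction n with
  | zero => intro k h; match k, h with | k+1, _ => rfl
  | succ n ih =>
    intro k h
    match k, h with
    | k+1, h =>
      show gaussBinom n k + T 2 ^ (k + 1) * gaussBinom n (k + 1) = 0
      rw [ih (by omega), ih (by omega)]; ring

lemma gauss_self : ∀ n : ℕ, gaussBinom n n = 1 := by
  intro n
  induction n with
  | zero => rfl
  | succ n ih =>
    show gaussBinom n n + T 2 ^ (n + 1) * gaussBinom n (n + 1) = 1
    rw [ih, gauss_of_lt (by omega)]; ring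

lemma gauss_pascal2 : ∀ n k : ℕ, k ≤ n →
    gaussBinom (n+1) (k+1) = gaussBinom n (k+1) + T (2*((n:ℤ)-k)) * gaussBinom n k := by
  intro n
  induction n with
  | zero =>
    intro k hk
    interval_cases k
    show (1 : LaurentPolynomial ℤ) + T 2 ^ 1 * 0 = 0 + T (2*(0-0)) * 1
    simp
  | succ n ih =>
    intro k hk
    rcases Nat.lt_or_ge k (n+1) with h | h
    · rcases k with _ | j
      · -- k = 0
        have ih0 := ih 0 (by omega)
        have e1 : gaussBinom (n+1+1) (0+1) = gaussBinom (n+1) 0 + T 2 ^ (0+1) * gaussBinom (n+1) (0+1) := rfl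
        have e2 : gaussBinom (n+1) (0+1) = gaussBinom n 0 + T 2 ^ (0+1) * gaussBinom n (0+1) := rfl
        conv_lhs => rw [e1, ih0]
        conv_rhs => rw [e2]
        simp only [T_pow, gauss_zero]
        push_cast
        all_goals ring_nf
        all_goals simp only [mul_assoc, ← T_add]
        all_goals ring_nf
      · -- k = j+1
        have hj : j ≤ n := by omega
        have hj1 : j + 1 ≤ n := by omega
        have ihj1 := ih (j+1) hj1
        have ihj := ih j hj
        have e1 : gaussBinom (n+1+1) (j+1+1) = gaussBinom (n+1) (j+1) + T 2 ^ (j+1+1) * gaussBinom (n+1) (j+1+1) := rfl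
        have eR2 : gaussBinom (n+1) (j+1+1) = gaussBinom n (j+1) + T 2 ^ (j+1+1) * gaussBinom n (j+1+1) := rfl
        have eR1 : gaussBinom (n+1) (j+1) = gaussBinom n j + T 2 ^ (j+1) * gaussBinom n (j+1) := rfl
        conv_lhs => rw [e1, ihj1, ihj]
        conv_rhs => rw [eR2, eR1]
        simp only [T_pow]
        push_cast
        all_goals ring_nf
        all_goals simp only [mul_assoc, ← T_add]
        all_goals ring_nf
    · -- k = n+1
      have hk1 : k = n+1 := by omega
      subst hk1
      rw [gauss_self, show gaussBinom (n+1) (n+1+1) = 0 from gauss_of_lt (by omega), gauss_self]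
      push_cast
      simp

lemma tBinom_zero (n : ℕ) : tBinom n 0 = 1 := by
  simp [tBinom, gauss_zero]

lemma tBinom_of_lt {n k : ℕ} (h : n < k) : tBinom n k = 0 := by
  simp [tBinom, gauss_of_lt h]

lemma fsum_ind [DecidableEq I] [DecidableEq G] (f : I × G →₀ ℕ) (pt : I × G) :
    (f.sum fun p c => (c : ℤ) * (if pt = p then 1 else 0)) = f pt := by
  rw [Finsupp.sum]
  simp only [mul_ite, mul_one, mul_zero]
  rw [Finset.sum_ite_eq f.support pt (fun p => ((f p : ℤ)))]
  by_cases h : pt ∈ f.support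
  · rw [if_pos h]
  · rw [if_neg h, Finsupp.notMem_support_iff.mp h]; simp

lemma fsum_ind2 [DecidableEq I] [DecidableEq G] (f : I × G →₀ ℕ) (s : Finset I) (c : G) :
    (f.sum fun p cc => (cc : ℤ) * (if p.1 ∈ s ∧ p.2 = c then 1 else 0))
      = ∑ j ∈ s, (f (j, c) : ℤ) := by
  have key : ∀ p : I × G, (if p.1 ∈ s ∧ p.2 = c then (1:ℤ) else 0)
      = ∑ j ∈ s, (if (j, c) = p then 1 else 0) := by
    rintro ⟨j₀, b⟩
    by_cases hb : b = c
    · subst hb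
      simp only [Prod.mk.injEq, and_true]
      rw [Finset.sum_ite_eq' s j₀ (fun _ => (1:ℤ))]
    · simp only [Prod.mk.injEq]
      rw [Finset.sum_eq_zero, if_neg (by tauto)]
      intro j hj
      rw [if_neg (by tauto)]
  simp only [key, Finset.mul_sum]
  rw [Finsupp.sum, Finset.sum_comm]
  exact Finset.sum_congr rfl fun j hj => fsum_ind f (j, c)

section
variable [Fintype I] [DecidableEq I] [DecidableEq G] [CommGroup G] (C : I → I → ℤ) (q : G)

abbrev MM (I G : Type*) [Group G] := (I × G →₀ ℕ) × (I × G →₀ ℕ)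
abbrev AA (I G : Type*) [Group G] := AddMonoidAlgebra (LaurentPolynomial ℤ) (MM I G)

lemma uIA_add (m n : MM I G) (i : I) (b : G) :
    uIA C q (m + n) i b = uIA C q m i b + uIA C q n i b := by
  simp only [uIA, Prod.fst_add, Prod.snd_add, Finsupp.add_apply, Nat.cast_add,
    Finset.sum_add_distrib]
  ring

lemma uIA_zero (i : I) (b : G) : uIA C q 0 i b = 0 := by
  simp [uIA]

lemma uIA_sum {σ : Type*} (t : Finset σ) (f : σ → MM I G) (i : I) (b : G) :
    uIA C q (∑ s ∈ t, f s) i b = ∑ s ∈ t, uIA C q (f s) i b := by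
  classical
  induction t using Finset.induction with
  | empty => simp [uIA_zero]
  | insert s t' hx ih =>
                    rw [Finset.sum_insert hx, Finset.sum_insert hx, uIA_add, ih]

lemma uIA_nsmul (k : ℕ) (m : MM I G) (i : I) (b : G) :
    uIA C q (k • m) i b = k * uIA C q m i b := by
  induction k with
  | zero => simp [uIA_zero]
  | succ k ih => rw [succ_nsmul, uIA_add, ih]; push_cast; ring

lemma dN_zero_right (m : MM I G) : dN C q m 0 = 0 := by
  simp [dN, uIA_zero]

lemma dN_add_left (m n x : MM I G) :
    dN C q (m + n) x = dN C q m x + dN C q n x := by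
  simp only [dN, Prod.fst_add, Prod.snd_add]
  rw [Finsupp.sum_add_index' (by intro a; push_cast; ring) (by intro a b c; push_cast; ring),
    Finsupp.sum_add_index' (by intro a; push_cast; ring) (by intro a b c; push_cast; ring)]
  ring

lemma dN_add_right (m x y : MM I G) :
    dN C q m (x + y) = dN C q m x + dN C q m y := by
  simp only [dN, uIA_add, Prod.fst_add, Finsupp.add_apply, Nat.cast_add, mul_add]
  rw [Finsupp.sum_add, Finsupp.sum_add]
  ring

lemma dN_nsmul_right (k : ℕ) (m x : MM I G) :
    dN C q m (k • x) = k * dN C q m x := by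
  induction k with
  | zero => simp [dN_zero_right]
  | succ k ih => rw [succ_nsmul, dN_add_right, ih]; push_cast; ring

lemma dN_left_V (i : I) (b : G) (m : MM I G) :
    dN C q (Vmon i b) m = uIA C q m i (b * q⁻¹) := by
  simp only [dN, Vmon]
  rw [Finsupp.sum_zero_index, Finsupp.sum_single_index] <;> simp

lemma uIA_V_eval (hsym : ∀ i j, C i j = C j i) (i : I) (c : G) (p : I × G) :
    uIA C q (Vmon i c) p.1 (p.2 * q⁻¹)
      = -(if (i, c * q * q) = p then 1 else 0) - (if (i, c) = p then 1 else 0)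
        + (if p.1 ∈ univ.filter (fun j => C j i = -1) ∧ p.2 = c * q then 1 else 0) := by
  obtain ⟨j, b⟩ := p
  have hsum : (∑ j' ∈ univ.filter (fun j' => C j' j = -1),
      ((Finsupp.single (i,c) (1:ℕ)) (j', b * q⁻¹) : ℤ))
      = if C i j = -1 ∧ b * q⁻¹ = c then 1 else 0 := by
    by_cases hb : b * q⁻¹ = c
    · rw [hb]
      simp only [Finsupp.single_apply, Prod.mk.injEq, and_true]
      push_cast
      rw [Finset.sum_ite_eq (univ.filter (fun j' => C j' j = -1)) i (fun _ => (1:ℤ))]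
      simp [hb]
    · rw [Finset.sum_eq_zero, if_neg (by tauto)]
      intro j' _
      simp only [Finsupp.single_apply, Prod.mk.injEq]
      rw [if_neg (by tauto)]
      simp
  simp only [uIA, Vmon]
  rw [hsum]
  simp only [Finsupp.coe_zero, Pi.zero_apply, Finsupp.single_apply, Prod.mk.injEq,
    Finset.mem_filter, Finset.mem_univ, true_and, Nat.cast_zero]
  have e1 : (i = j ∧ c = b * q⁻¹ * q⁻¹) = ((i, c * q * q) = (j, b)) := by
    simp only [Prod.mk.injEq]
    apply propext
    constructor <;> rintro ⟨rfl, h⟩ <;> refine ⟨rfl, ?_⟩ <;> subst h <;> group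
  have e2 : (i = j ∧ c = b * q⁻¹ * q) = ((i, c) = (j, b)) := by
    simp only [Prod.mk.injEq]
    apply propext
    constructor <;> rintro ⟨rfl, h⟩ <;> refine ⟨rfl, ?_⟩ <;> subst h <;> group
  have e3 : (C i j = -1 ∧ b * q⁻¹ = c) = (C j i = -1 ∧ b = c * q) := by
    rw [hsym i j]
    apply propext
    constructor <;> rintro ⟨h1, h2⟩ <;> refine ⟨h1, ?_⟩ <;> subst h2 <;> group
  simp only [e1, e2, e3, Prod.mk.injEq]
  push_cast
  split <;> split <;> split <;> ring

lemma dN_right_V (hsym : ∀ i j, C i j = C j i) (i : I) (c : G)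
    (m : MM I G) :
    dN C q m (Vmon i c) = uIA C q m i (c * q) := by
  have h2 : (m.2.sum fun p cc => (cc : ℤ) * (((Vmon i c).1 : (I × G →₀ ℕ)) (p.1, p.2 * q⁻¹) : ℤ))
      = m.2 (i, c * q) := by
    have : ∀ p : I × G, (((Vmon i c).1 : (I × G →₀ ℕ)) (p.1, p.2 * q⁻¹) : ℤ)
        = (if (i, c * q) = p then 1 else 0) := by
      rintro ⟨j, b⟩
      simp only [Vmon, Finsupp.single_apply, Prod.mk.injEq]
      have : (i = j ∧ c = b * q⁻¹) = (i = j ∧ c * q = b) := by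
        apply propext
        constructor <;> rintro ⟨rfl, h⟩ <;> refine ⟨rfl, ?_⟩ <;> subst h <;> group
      simp only [this]
      push_cast
      split <;> simp
    simp only [this]
    exact fsum_ind m.2 (i, c * q)
  have h1 : (m.1.sum fun p cc => (cc : ℤ) * uIA C q (Vmon i c) p.1 (p.2 * q⁻¹))
      = -(m.1 (i, c * q * q) : ℤ) - (m.1 (i, c) : ℤ)
        + ∑ j ∈ univ.filter (fun j => C j i = -1), (m.1 (j, c * q) : ℤ) := by
    simp only [uIA_V_eval C q hsym i c]
    have expand : ∀ (p : I × G) (cc : ℕ), (cc : ℤ) *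
        (-(if (i, c * q * q) = p then (1:ℤ) else 0) - (if (i, c) = p then 1 else 0)
          + (if p.1 ∈ univ.filter (fun j => C j i = -1) ∧ p.2 = c * q then 1 else 0))
        = -((cc : ℤ) * (if (i, c * q * q) = p then (1:ℤ) else 0))
          + -((cc : ℤ) * (if (i, c) = p then 1 else 0))
          + (cc : ℤ) * (if p.1 ∈ univ.filter (fun j => C j i = -1) ∧ p.2 = c * q then 1 else 0) := by
      intro p cc; ring
    simp only [expand]
    rw [Finsupp.sum_add, Finsupp.sum_add, Finsupp.sum_neg, Finsupp.sum_neg,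
      fsum_ind, fsum_ind, fsum_ind2]
    ring
  rw [dN, h1, h2, uIA]
  have : c * q * q⁻¹ = c := by group
  rw [this]
  ring

lemma uIA_V_self (i : I) (a : G) (hqq : q * q ≠ 1) (hq1 : q ≠ 1) :
    uIA C q (Vmon i (a * q)) i a = -1 := by
  have h1 : ¬ ((i, a * q) = (i, a * q⁻¹)) := by
    simp only [Prod.mk.injEq, true_and]
    intro h
    apply hqq
    have h2 : q = q⁻¹ := mul_left_cancel h
    nth_rewrite 2 [h2]
    simp
  have h3 : ∀ j : I, ¬ ((i, a * q) = (j, a)) := by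
    rintro j h
    apply hq1
    rw [Prod.mk.injEq] at h
    exact mul_left_cancel (by rw [h.2, mul_one])
  simp only [uIA, Vmon, Finsupp.coe_zero, Pi.zero_apply, Nat.cast_zero]
  rw [Finsupp.single_apply, Finsupp.single_apply, if_neg h1, if_pos rfl]
  rw [Finset.sum_eq_zero]
  · simp
  · intro j hj
    rw [Finsupp.single_apply, if_neg (h3 j)]
    simp

lemma star_single_single (m m' : MM I G) (c c' : LaurentPolynomial ℤ) :
    star C q (AddMonoidAlgebra.single m c) (AddMonoidAlgebra.single m' c')
      = AddMonoidAlgebra.single (m + m') (T (2 * dN C q m m') * c * c') := by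
  unfold _root_.star
  rw [AddMonoidAlgebra.coeff_single, AddMonoidAlgebra.coeff_single]
  rw [Finsupp.sum_single_index, Finsupp.sum_single_index]
  · simp
  · simp [Finsupp.sum_single_index]

lemma star_add_right (x y z : AA I G) :
    star C q x (y + z) = star C q x y + star C q x z := by
  unfold _root_.star
  rw [AddMonoidAlgebra.coeff_add]
  rw [← Finsupp.sum_add]
  apply Finsupp.sum_congr
  intro m₁ _
  rw [Finsupp.sum_add_index' (by intro a; simp) (by intro a b₁ b₂; simp [mul_add, AddMonoidAlgebra.single_add])]

lemma star_add_left (x y z : AA I G) :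
    star C q (x + y) z = star C q x z + star C q y z := by
  unfold _root_.star
  rw [AddMonoidAlgebra.coeff_add]
  rw [Finsupp.sum_add_index' (by intro a; simp) ?_]
  intro m₁ c₁ c₂
  rw [← Finsupp.sum_add]
  apply Finsupp.sum_congr
  intro m₂ _
  rw [← AddMonoidAlgebra.single_add]
  congr 1
  ring

lemma star_zero_right (x : AA I G) : star C q x 0 = 0 := by
  unfold _root_.star
  simp [Finsupp.sum_zero_index]

lemma star_sum_right {σ : Type*} (x : AA I G) (s : Finset σ) (f : σ → AA I G) :
    star C q x (∑ k ∈ s, f k) = ∑ k ∈ s, star C q x (f k) := by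
  classical
  induction s using Finset.induction with
  | empty => simp [star_zero_right]
  | insert a s' hx ih =>
                    rw [Finset.sum_insert hx, Finset.sum_insert hx, star_add_right, ih]

end

lemma final_sum_abstract {A' : Type*} [AddCommMonoid A'] (A B F : ℕ → A') (p : ℕ)
    (hAp : A (p+1) = 0)
    (hA0 : A 0 = F 0)
    (hABF : ∀ k ∈ range (p+1), A (k+1) + B k = F (k+1)) :
    (∑ r ∈ range (p+1), A r) + (∑ r ∈ range (p+1), B r) = ∑ r ∈ range (p+1+1), F r := by
  have h1 : ∑ r ∈ range (p+1), A r = A 0 + ∑ k ∈ range (p+1), A (k+1) := by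
    have h2 := Finset.sum_range_succ A (p+1)
    rw [hAp, add_zero] at h2
    rw [← h2, Finset.sum_range_succ' A (p+1)]
    abel
  rw [h1, Finset.sum_range_succ' F (p+1)]
  rw [add_assoc, ← Finset.sum_add_distrib, Finset.sum_congr rfl hABF, hA0]
  abel

/-- Let `m₁, …, m_p` be monomials such that for some fixed `a`, `u_{i,a}(m_r) = 1`
and `u_{i,b}(m_r) = 0` for all `b ≠ a` and all `r`. Then there exists `α ∈ ℤ` with
`(m₁*(1+V_{i,aq})) * ⋯ * (m_p*(1+V_{i,aq}))
  = t^α · m₁⋯m_p · Σ_{r=0}^p t^{r(p-r)}·[p choose r]_t · V_{i,aq}^r`,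
where `*` is the product twisted by Nakajima's bicharacter `d_N`. -/
theorem star_product_dominant_factors
    [Fintype I] [DecidableEq I] [DecidableEq G] [CommGroup G]
    (C : I → I → ℤ) (hsym : ∀ i j, C i j = C j i) (hdiag : ∀ i, C i i = 2)
    (q : G) (hq : ∀ n : ℤ, q ^ n = 1 → n = 0)
    (p : ℕ) (ms : Fin p → (I × G →₀ ℕ) × (I × G →₀ ℕ)) (i : I) (a : G)
    (hms : ∀ (r : Fin p) (b : G),
      uIA C q (ms r) i b = if b = a then 1 else 0) :
    ∃ α : ℤ,
      List.foldr (star C q) (AddMonoidAlgebra.single 0 1)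
        (List.ofFn fun r : Fin p =>
          star C q (AddMonoidAlgebra.single (ms r) 1)
            (1 + AddMonoidAlgebra.single (Vmon i (a * q)) 1)) =
      ∑ r ∈ range (p + 1),
        (T α * T ((r : ℤ) * ((p : ℤ) - (r : ℤ))) * tBinom p r) •
          AddMonoidAlgebra.single ((∑ s : Fin p, ms s) + r • Vmon i (a * q)) 1 := by
  -- basic consequences of hq
  have hqne1 : q ≠ 1 := by
    intro h
    exact absurd (hq 1 (by rw [zpow_one, h])) (by norm_num)
  have hqq : q * q ≠ 1 := by
    intro h
    have h2 : q ^ (2:ℤ) = 1 := by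
      rw [show (2:ℤ) = ((2:ℕ):ℤ) by norm_num, zpow_natCast, pow_two, h]
    exact absurd (hq 2 h2) (by norm_num)
  have hq2 : ¬ (a * q * q = a) := by
    intro h
    apply hqq
    rw [mul_assoc] at h
    exact mul_left_cancel (by rw [h, mul_one])
  -- dN of a dominant monomial with V is 0
  have hdmV : ∀ (m : MM I G), (∀ b, uIA C q m i b = if b = a then 1 else 0) →
      dN C q m (Vmon i (a*q)) = 0 := by
    intro m hm
    rw [dN_right_V C q hsym, hm, if_neg hq2]
  have hdVm : ∀ (X : MM I G), dN C q (Vmon i (a*q)) X = uIA C q X i a := by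
    intro X
    rw [dN_left_V, show a * q * q⁻¹ = a by group]
  have hsm : ∀ (c : LaurentPolynomial ℤ) (x : MM I G),
      c • (AddMonoidAlgebra.single x (1 : LaurentPolynomial ℤ)) = AddMonoidAlgebra.single x c := by
    intro c x
    simp
  induction p with
  | zero =>
    refine ⟨0, ?_⟩
    rw [List.ofFn_zero, List.foldr_nil, Finset.sum_range_one]
    simp [tBinom_zero, hsm]
  | succ p ih =>
    obtain ⟨α, hα⟩ := ih (fun r => ms r.succ) (fun r b => hms r.succ b)
    set Mp : MM I G := ∑ s : Fin p, ms s.succ with hMp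
    refine ⟨α + 2 * dN C q (ms 0) Mp, ?_⟩
    set β : ℤ := dN C q (ms 0) Mp with hβ
    -- head
    have hhead : star C q (AddMonoidAlgebra.single (ms 0) 1)
        (1 + AddMonoidAlgebra.single (Vmon i (a*q)) 1)
        = AddMonoidAlgebra.single (ms 0) 1 + AddMonoidAlgebra.single (ms 0 + Vmon i (a*q)) 1 := by
      have h1def : (1 : AA I G) = AddMonoidAlgebra.single (0 : MM I G) (1 : LaurentPolynomial ℤ) :=
        AddMonoidAlgebra.one_def
      rw [h1def, star_add_right, star_single_single, star_single_single,
        dN_zero_right, hdmV (ms 0) (hms 0)]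
      simp
    have hd1 : ∀ r : ℕ, dN C q (ms 0) (Mp + r • Vmon i (a*q)) = β := by
      intro r
      rw [dN_add_right, dN_nsmul_right, hdmV (ms 0) (hms 0), mul_zero, add_zero, hβ]
    have hMpu : uIA C q Mp i a = p := by
      rw [hMp, uIA_sum]
      rw [Finset.sum_congr rfl (fun s _ => by rw [hms s.succ a, if_pos rfl])]
      simp
    have hd2 : ∀ r : ℕ, dN C q (ms 0 + Vmon i (a*q)) (Mp + r • Vmon i (a*q))
        = β + ((p:ℤ) - (r:ℤ)) := by
      intro r
      rw [dN_add_left, hd1 r, hdVm, uIA_add, uIA_nsmul, hMpu,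
        uIA_V_self C q i a hqq hqne1]
      ring
    have hmono1 : ∀ r : ℕ, ms 0 + (Mp + r • Vmon i (a*q))
        = (ms 0 + Mp) + r • Vmon i (a*q) := by
      intro r; abel
    have hmono2 : ∀ r : ℕ, (ms 0 + Vmon i (a*q)) + (Mp + r • Vmon i (a*q))
        = (ms 0 + Mp) + (r+1) • Vmon i (a*q) := by
      intro r; rw [succ_nsmul]; abel
    rw [List.ofFn_succ, List.foldr_cons]
    rw [hα, hhead, star_add_left]
    simp only [hsm]
    rw [star_sum_right, star_sum_right]
    simp only [star_single_single, hd1, hd2, hmono1, hmono2]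
    rw [Fin.sum_univ_succ]
    refine final_sum_abstract _ _ _ p ?_ ?_ ?_
    · -- A (p+1) = 0
      rw [tBinom_of_lt (Nat.lt_succ_self p)]
      simp only [mul_zero, AddMonoidAlgebra.single_zero]
    · -- A 0 = F 0
      congr 1
      rw [tBinom_zero, tBinom_zero]
      push_cast
      ring_nf
      simp only [mul_assoc, ← T_add]
      ring_nf
    · -- pointwise Pascal
      intro k hk
      have hk' : k ≤ p := by
        have := Finset.mem_range.mp hk; omega
      rw [← AddMonoidAlgebra.single_add]
      congr 1
      simp only [tBinom]
      rw [gauss_pascal2 p k hk']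
      push_cast
      ring_nf
      simp only [mul_assoc, ← T_add]
      ring_nf
end
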